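/- For R < 1.75r, consider the locally Steiner tree Σ₀ consisting of: a horizontal segment from A = (0, h) to P = (a, h'), segments from P forming appropriate Steiner configuration with a vertical segment and two slanted segments reaching within distance r of the top boundary, as depicted for a stadium of width 2R. If R < 1.75r then the length of Σ₀ is strictly smaller than 2|AB| where B is the right endpoint at the same height as A. Concretely: there exist angles making a connected set covering a full-width slab of the stadium boundary within distance r whose length per unit horizontal length is a constant c < 2. -/

import Mathlib

open MeasureTheory

lemma seg_compact (a b : ℂ) : IsCompact (segment ℝ a b) := by
  rw [segment_eq_image']
  exact isCompact_Icc.image (by continuity)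

lemma seg_pt_mem (a b : ℂ) {s : ℝ} (h0 : 0 ≤ s) (h1 : s ≤ 1) :
    a + s • (b - a) ∈ segment ℝ a b := by
  rw [segment_eq_image']
  exact ⟨s, ⟨h0, h1⟩, rfl⟩

lemma seg_pt_re (a b : ℂ) (s : ℝ) : (a + s • (b - a)).re = a.re + s * (b.re - a.re) := by
  simp [Complex.real_smul]

lemma seg_pt_im (a b : ℂ) (s : ℝ) : (a + s • (b - a)).im = a.im + s * (b.im - a.im) := by
  simp [Complex.real_smul]

set_option maxHeartbeats 1600000 in
/-- Stadium counterexample: the stadium of width parameter R is the set of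
points at distance exactly R from a core segment [0, L] ⊂ ℝ ≅ ℝ × {0} ⊂ ℂ.
If R < 1.75·r, then (for a suitable length L) there is a compact connected set
Sig containing two points A, B at the same height with 0 ≤ Re A < Re B ≤ L,
covering the full-width slab {p on the stadium : Re A ≤ Re p ≤ Re B} within
distance r, whose length is strictly smaller than 2·|AB|. -/
theorem stmt_19 (r R : ℝ) (hr : 0 < r) (hR : 0 < R) (hRr : R < 1.75 * r) :
    ∃ (L : ℝ) (Sig : Set ℂ) (A B : ℂ), 0 < L ∧
      IsCompact Sig ∧ IsConnected Sig ∧ A ∈ Sig ∧ B ∈ Sig ∧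
      A.im = B.im ∧ 0 ≤ A.re ∧ A.re < B.re ∧ B.re ≤ L ∧
      (∀ p : ℂ, Metric.infDist p (segment ℝ (0 : ℂ) (L : ℂ)) = R →
        A.re ≤ p.re → p.re ≤ B.re → Metric.infDist p Sig ≤ r) ∧
      μH[1] Sig < ENNReal.ofReal (2 * dist A B) := by
  have h2r : R < 2 * r := by nlinarith
  have hm : |R - r| < r := abs_sub_lt_iff.mpr ⟨by linarith, by linarith⟩
  have hm0 : 0 ≤ |R - r| := abs_nonneg _
  obtain ⟨m, hmdef⟩ : ∃ m, m = |R - r| := ⟨_, rfl⟩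
  rw [← hmdef] at hm hm0
  obtain ⟨e, hedef⟩ : ∃ e, e = r - m := ⟨_, rfl⟩
  have he : 0 < e := by rw [hedef]; linarith
  obtain ⟨d, hddef⟩ : ∃ d, d = r ^ 2 / e := ⟨_, rfl⟩
  have hd : 0 < d := by rw [hddef]; positivity
  have hde : d * e = r ^ 2 := by rw [hddef]; exact div_mul_cancel₀ _ (ne_of_gt he)
  obtain ⟨W, hWdef⟩ : ∃ W, W = 2 * d + 2 * r := ⟨_, rfl⟩
  have hW : 0 < W := by rw [hWdef]; positivity
  have hW2 : W / 2 = d + r := by rw [hWdef]; ring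
  have hsq : Real.sqrt (d ^ 2 + r ^ 2) ≤ d + e / 2 :=
    calc Real.sqrt (d ^ 2 + r ^ 2) ≤ Real.sqrt ((d + e / 2) ^ 2) :=
          Real.sqrt_le_sqrt (by nlinarith)
      _ = d + e / 2 := Real.sqrt_sq (by positivity)
  have hrme : r = m + e := by rw [hedef]; ring
  have key : m + Real.sqrt (d ^ 2 + r ^ 2) < d + r := by linarith
  -- the points
  set A : ℂ := ↑(r - R) * Complex.I with hA
  set B : ℂ := ↑W + ↑(r - R) * Complex.I with hB
  set S : ℂ := ↑(W / 2) + ↑(r - R) * Complex.I with hS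
  set J : ℂ := ↑(W / 2) + ↑(R - r) * Complex.I with hJ
  set T1 : ℂ := ↑r + ↑R * Complex.I with hT1
  set T2 : ℂ := ↑(W - r) + ↑R * Complex.I with hT2
  have hAre : A.re = 0 := by simp [hA]
  have hAim : A.im = r - R := by simp [hA]
  have hBre : B.re = W := by simp [hB]
  have hBim : B.im = r - R := by simp [hB]
  have hSre : S.re = W / 2 := by simp [hS]
  have hSim : S.im = r - R := by simp [hS]
  have hJre : J.re = W / 2 := by simp [hJ]
  have hJim : J.im = R - r := by simp [hJ]
  have hT1re : T1.re = r := by simp [hT1]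
  have hT1im : T1.im = R := by simp [hT1]
  have hT2re : T2.re = W - r := by simp [hT2]
  have hT2im : T2.im = R := by simp [hT2]
  set Sig : Set ℂ :=
    ((segment ℝ A B ∪ segment ℝ S J) ∪ segment ℝ J T1) ∪ segment ℝ J T2 with hSig
  have hmemAB : ∀ x, x ∈ segment ℝ A B → x ∈ Sig := fun x h => by
    rw [hSig]; exact Set.mem_union_left _ (Set.mem_union_left _ (Set.mem_union_left _ h))
  have hmemSJ : ∀ x, x ∈ segment ℝ S J → x ∈ Sig := fun x h => by
    rw [hSig]; exact Set.mem_union_left _ (Set.mem_union_left _ (Set.mem_union_right _ h))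
  have hmemJT1 : ∀ x, x ∈ segment ℝ J T1 → x ∈ Sig := fun x h => by
    rw [hSig]; exact Set.mem_union_left _ (Set.mem_union_right _ h)
  have hmemJT2 : ∀ x, x ∈ segment ℝ J T2 → x ∈ Sig := fun x h => by
    rw [hSig]; exact Set.mem_union_right _ h
  have hSmem : S ∈ segment ℝ A B := by
    have hh : S = A + (1 / 2 : ℝ) • (B - A) := by
      apply Complex.ext
      · rw [seg_pt_re, hAre, hBre, hSre]; ring
      · rw [seg_pt_im, hAim, hBim, hSim]; ring
    rw [hh]; exact seg_pt_mem A B (by norm_num) (by norm_num)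
  have hconn : IsConnected Sig := by
    rw [hSig]
    have c1 : IsConnected (segment ℝ A B) :=
      (convex_segment A B).isConnected ⟨A, left_mem_segment ℝ A B⟩
    have c2 : IsConnected (segment ℝ S J) :=
      (convex_segment S J).isConnected ⟨S, left_mem_segment ℝ S J⟩
    have c3 : IsConnected (segment ℝ J T1) :=
      (convex_segment J T1).isConnected ⟨J, left_mem_segment ℝ J T1⟩
    have c4 : IsConnected (segment ℝ J T2) :=
      (convex_segment J T2).isConnected ⟨J, left_mem_segment ℝ J T2⟩
    have u1 : IsConnected (segment ℝ A B ∪ segment ℝ S J) :=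
      IsConnected.union ⟨S, hSmem, left_mem_segment ℝ S J⟩ c1 c2
    have u2 : IsConnected ((segment ℝ A B ∪ segment ℝ S J) ∪ segment ℝ J T1) :=
      IsConnected.union ⟨J, Or.inr (right_mem_segment ℝ S J), left_mem_segment ℝ J T1⟩ u1 c3
    exact IsConnected.union
      ⟨J, Or.inl (Or.inr (right_mem_segment ℝ S J)), left_mem_segment ℝ J T2⟩ u2 c4
  have hcomp : IsCompact Sig := by
    rw [hSig]
    exact (((seg_compact A B).union (seg_compact S J)).union (seg_compact J T1)).union
      (seg_compact J T2)
  refine ⟨W, Sig, A, B, hW, hcomp, hconn, hmemAB A (left_mem_segment ℝ A B),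
    hmemAB B (right_mem_segment ℝ A B), by rw [hAim, hBim], by rw [hAre],
    by rw [hAre, hBre]; exact hW, le_of_eq hBre, ?_, ?_⟩
  · -- coverage
    intro q hq hq1 hq2
    rw [hAre] at hq1
    rw [hBre] at hq2
    have hseg0 : ∀ z ∈ segment ℝ (0 : ℂ) (W : ℂ), z.im = 0 := by
      intro z hz
      rw [segment_eq_image'] at hz
      obtain ⟨t, _, rfl⟩ := hz
      simp [Complex.real_smul]
    have hub : Metric.infDist q (segment ℝ (0 : ℂ) (W : ℂ)) ≤ |q.im| := by
      have hmem : (↑q.re : ℂ) ∈ segment ℝ (0 : ℂ) (W : ℂ) := by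
        have hh : (↑q.re : ℂ) = 0 + (q.re / W) • ((W : ℂ) - 0) := by
          rw [zero_add, sub_zero, Complex.real_smul, ← Complex.ofReal_mul,
            div_mul_cancel₀ _ (ne_of_gt hW)]
        rw [hh]
        exact seg_pt_mem _ _ (div_nonneg hq1 hW.le) ((div_le_one hW).2 hq2)
      have hdist : dist q (↑q.re : ℂ) = |q.im| := by
        rw [Complex.dist_of_re_eq (by simp), Complex.ofReal_im, Real.dist_eq, sub_zero]
      rw [← hdist]
      exact Metric.infDist_le_dist_of_mem hmem
    have hlb : |q.im| ≤ Metric.infDist q (segment ℝ (0 : ℂ) (W : ℂ)) := by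
      by_contra hcon
      push_neg at hcon
      obtain ⟨z, hz, hzd⟩ :=
        (Metric.infDist_lt_iff ⟨0, left_mem_segment ℝ 0 _⟩).1 hcon
      have h1 : |q.im| ≤ dist q z := by
        have h2 : |(q - z).im| ≤ ‖q - z‖ := Complex.abs_im_le_norm _
        rw [Complex.sub_im, hseg0 z hz, sub_zero] at h2
        rwa [Complex.dist_eq]
      linarith
    have him : |q.im| = R := by rw [← hq]; exact le_antisymm hlb hub
    rcases (abs_eq hR.le).1 him with htop | hbot
    · -- top boundary
      rcases le_total q.re r with hx1 | hx1
      · -- left tip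
        refine le_trans (Metric.infDist_le_dist_of_mem
          (hmemJT1 T1 (right_mem_segment ℝ J T1))) ?_
        rw [Complex.dist_of_im_eq (by rw [htop, hT1im]), hT1re, Real.dist_eq]
        rw [abs_le]
        constructor <;> linarith
      · rcases le_total q.re (W / 2) with hx2 | hx2
        · -- left arm
          obtain ⟨s, hsdef⟩ : ∃ s, s = (W / 2 - q.re) / d := ⟨_, rfl⟩
          have hs0 : 0 ≤ s := by rw [hsdef]; exact div_nonneg (by linarith) hd.le
          have hs1 : s ≤ 1 := by rw [hsdef]; exact (div_le_one hd).2 (by linarith)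
          refine le_trans (Metric.infDist_le_dist_of_mem
            (hmemJT1 _ (seg_pt_mem J T1 hs0 hs1))) ?_
          have hre : (J + s • (T1 - J)).re = q.re := by
            rw [seg_pt_re, hJre, hT1re, hsdef, hW2]
            field_simp
            ring
          have him2 : (J + s • (T1 - J)).im = R - r + s * r := by
            rw [seg_pt_im, hJim, hT1im]; ring
          rw [Complex.dist_of_re_eq hre.symm, him2, htop, Real.dist_eq,
            show R - (R - r + s * r) = (1 - s) * r by ring,
            abs_of_nonneg (mul_nonneg (by linarith) hr.le)]
          linarith [mul_nonneg hs0 hr.le]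
        · rcases le_total q.re (W - r) with hx3 | hx3
          · -- right arm
            obtain ⟨s, hsdef⟩ : ∃ s, s = (q.re - W / 2) / d := ⟨_, rfl⟩
            have hs0 : 0 ≤ s := by rw [hsdef]; exact div_nonneg (by linarith) hd.le
            have hs1 : s ≤ 1 := by rw [hsdef]; exact (div_le_one hd).2 (by linarith)
            refine le_trans (Metric.infDist_le_dist_of_mem
              (hmemJT2 _ (seg_pt_mem J T2 hs0 hs1))) ?_
            have hre : (J + s • (T2 - J)).re = q.re := by
              rw [seg_pt_re, hJre, hT2re, hsdef, hW2, hWdef]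
              field_simp
              ring
            have him2 : (J + s • (T2 - J)).im = R - r + s * r := by
              rw [seg_pt_im, hJim, hT2im]; ring
            rw [Complex.dist_of_re_eq hre.symm, him2, htop, Real.dist_eq,
              show R - (R - r + s * r) = (1 - s) * r by ring,
              abs_of_nonneg (mul_nonneg (by linarith) hr.le)]
            linarith [mul_nonneg hs0 hr.le]
          · -- right tip
            refine le_trans (Metric.infDist_le_dist_of_mem
              (hmemJT2 T2 (right_mem_segment ℝ J T2))) ?_
            rw [Complex.dist_of_im_eq (by rw [htop, hT2im]), hT2re, Real.dist_eq]
            rw [abs_le]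
            constructor <;> linarith
    · -- bottom boundary
      obtain ⟨s, hsdef⟩ : ∃ s, s = q.re / W := ⟨_, rfl⟩
      have hs0 : 0 ≤ s := by rw [hsdef]; exact div_nonneg hq1 hW.le
      have hs1 : s ≤ 1 := by rw [hsdef]; exact (div_le_one hW).2 hq2
      refine le_trans (Metric.infDist_le_dist_of_mem
        (hmemAB _ (seg_pt_mem A B hs0 hs1))) ?_
      have hre : (A + s • (B - A)).re = q.re := by
        rw [seg_pt_re, hAre, hBre, hsdef, zero_add, sub_zero, div_mul_cancel₀ _ (ne_of_gt hW)]
      have him2 : (A + s • (B - A)).im = r - R := by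
        rw [seg_pt_im, hAim, hBim]; ring
      rw [Complex.dist_of_re_eq hre.symm, him2, hbot, Real.dist_eq,
        show -R - (r - R) = -r by ring, abs_neg, abs_of_nonneg hr.le]
  · -- measure bound
    have hb : μH[1] Sig ≤ edist A B + edist S J + edist J T1 + edist J T2 := by
      have step : μH[1] Sig ≤ μH[1] (segment ℝ A B) + μH[1] (segment ℝ S J)
          + μH[1] (segment ℝ J T1) + μH[1] (segment ℝ J T2) := by
        rw [hSig]
        calc μH[1] (((segment ℝ A B ∪ segment ℝ S J) ∪ segment ℝ J T1) ∪ segment ℝ J T2)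
            ≤ μH[1] ((segment ℝ A B ∪ segment ℝ S J) ∪ segment ℝ J T1)
              + μH[1] (segment ℝ J T2) := measure_union_le _ _
          _ ≤ (μH[1] (segment ℝ A B ∪ segment ℝ S J) + μH[1] (segment ℝ J T1))
              + μH[1] (segment ℝ J T2) := by gcongr; exact measure_union_le _ _
          _ ≤ ((μH[1] (segment ℝ A B) + μH[1] (segment ℝ S J)) + μH[1] (segment ℝ J T1))
              + μH[1] (segment ℝ J T2) := by gcongr; exact measure_union_le _ _
      simpa only [hausdorffMeasure_segment] using step
    have dAB : dist A B = W := by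
      rw [Complex.dist_of_im_eq (hAim.trans hBim.symm), hAre, hBre, Real.dist_eq,
        zero_sub, abs_neg, abs_of_nonneg hW.le]
    have dSJ : dist S J = 2 * m := by
      rw [Complex.dist_of_re_eq (hSre.trans hJre.symm), hSim, hJim, Real.dist_eq,
        show r - R - (R - r) = (-2) * (R - r) by ring, abs_mul]
      rw [← hmdef]
      norm_num
    have dJT1 : dist J T1 = Real.sqrt (d ^ 2 + r ^ 2) := by
      rw [Complex.dist_eq_re_im, hJre, hJim, hT1re, hT1im]
      congr 1
      rw [hW2]; ring
    have dJT2 : dist J T2 = Real.sqrt (d ^ 2 + r ^ 2) := by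
      rw [Complex.dist_eq_re_im, hJre, hJim, hT2re, hT2im]
      congr 1
      rw [hW2, hWdef]; ring
    have hs0 : 0 ≤ Real.sqrt (d ^ 2 + r ^ 2) := Real.sqrt_nonneg _
    have h2m : (0 : ℝ) ≤ 2 * m := by linarith
    refine lt_of_le_of_lt hb ?_
    rw [edist_dist, edist_dist, edist_dist, edist_dist, dAB, dSJ, dJT1, dJT2,
      ← ENNReal.ofReal_add hW.le h2m,
      ← ENNReal.ofReal_add (by linarith) hs0,
      ← ENNReal.ofReal_add (by linarith) hs0]
    rw [ENNReal.ofReal_lt_ofReal_iff (by linarith)]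
    linarith [key, hWdef]
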